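/- Let (Z_j)_{j ≥ 0} be a Markov chain on a finite state space S with transition matrix P started at an arbitrary fixed state s ∈ S, and suppose there are a probability vector π on S with π_r > 0 for all r, a constant C < ∞ and ρ ∈ (0,1) such that |(P^k)_{ir} − π_r| ≤ C ρ^k for all k ≥ 1 and all i, r ∈ S. For i ∈ S and n ≥ 1 let W_{in} := ∑_{j=1}^n 1[Z_j = i]. Then for all i, r ∈ S: (a) lim_{n→∞} n^{-1} E[W_{in}] = π_i; and (b) lim_{n→∞} n^{-1} Cov(W_{in}, W_{rn}) = V_{ir}, where V_{ir} := π_i ∑_{k ≥ 1} ((P^k)_{ir} − π_r) + π_r ∑_{k ≥ 1} ((P^k)_{ri} − π_i) + δ_{ir} π_i − π_i π_r, with δ_{ir} the Kronecker delta (the two series converge absolutely by the geometric ergodicity hypothesis). -/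

import Mathlib

open MeasureTheory Finset Filter


/-- the path of length `m` starting at `a` with subsequent states `g`. -/
def MCpth {S : Type*} (a : S) {m : ℕ} (g : Fin m → S) : ℕ → S
  | 0 => a
  | (t+1) => if h : t < m then g ⟨t, h⟩ else a

lemma MCpth_zero {S : Type*} (a : S) {m : ℕ} (g : Fin m → S) : MCpth a g 0 = a := rfl

lemma MCpth_succ {S : Type*} (a : S) {m : ℕ} (g : Fin m → S) {t : ℕ} (h : t < m) :
    MCpth a g (t+1) = g ⟨t, h⟩ := by simp [MCpth, h]

lemma MCpth_cons {S : Type*} (a x : S) {m : ℕ} (g : Fin m → S) {t : ℕ} (ht : t ≤ m) :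
    MCpth a (Fin.cons x g) (t+1) = MCpth x g t := by
  cases t with
  | zero => simp [MCpth]
  | succ u =>
      have hu : u < m := ht
      have hu1 : u + 1 < m + 1 := Nat.succ_lt_succ hu
      rw [MCpth_succ a (Fin.cons x g) hu1, MCpth_succ x g hu]
      exact Fin.cons_succ (α := fun _ => S) x g ⟨u, hu⟩

lemma MC_step {S : Type*} [Fintype S] (P : Matrix S S ℝ) (a x : S) {m : ℕ} (g : Fin m → S) :
    ∏ t ∈ range (m+1), P (MCpth a (Fin.cons x g) t) (MCpth a (Fin.cons x g) (t+1))
      = P a x * ∏ t ∈ range m, P (MCpth x g t) (MCpth x g (t+1)) := by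
  rw [Finset.prod_range_succ']
  have h0 : MCpth a (Fin.cons x g) 0 = a := rfl
  have h1 : MCpth a (Fin.cons x g) 1 = x := MCpth_cons a x g (Nat.zero_le m)
  rw [h0, h1, mul_comm]
  congr 1
  refine Finset.prod_congr rfl fun t htm => ?_
  rw [MCpth_cons a x g (le_of_lt (Finset.mem_range.mp htm)),
    MCpth_cons a x g (Finset.mem_range.mp htm)]

/-- path-sum identity with a weight on the endpoint -/
lemma MC_key {S : Type*} [Fintype S] [DecidableEq S] (P : Matrix S S ℝ) :
    ∀ (m : ℕ) (a : S) (w : S → ℝ),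
    ∑ g : Fin m → S, (∏ t ∈ range m, P (MCpth a g t) (MCpth a g (t+1))) * w (MCpth a g m)
      = ∑ b, (P ^ m) a b * w b := by
  intro m
  induction m with
  | zero =>
      intro a w
      rw [Fintype.sum_unique]
      simp [Matrix.one_apply, MCpth_zero]
  | succ m ih =>
      intro a w
      rw [← Equiv.sum_comp (Fin.consEquiv (fun _ : Fin (m+1) => S))
        (fun g => (∏ t ∈ range (m+1), P (MCpth a g t) (MCpth a g (t+1))) * w (MCpth a g (m+1)))]
      rw [Fintype.sum_prod_type]
      have : ∀ (x : S) (g : Fin m → S),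
          (∏ t ∈ range (m+1), P (MCpth a (Fin.cons x g) t) (MCpth a (Fin.cons x g) (t+1))) *
            w (MCpth a (Fin.cons x g) (m+1))
          = P a x * ((∏ t ∈ range m, P (MCpth x g t) (MCpth x g (t+1))) * w (MCpth x g m)) := by
        intro x g
        rw [MC_step, MCpth_cons a x g le_rfl, mul_assoc]
      calc ∑ x : S, ∑ g : Fin m → S, (∏ t ∈ range (m+1),
              P (MCpth a ((Fin.consEquiv _) (x, g)) t) (MCpth a ((Fin.consEquiv _) (x, g)) (t+1))) *
              w (MCpth a ((Fin.consEquiv _) (x, g)) (m+1))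
          = ∑ x : S, P a x * ∑ g : Fin m → S,
              (∏ t ∈ range m, P (MCpth x g t) (MCpth x g (t+1))) * w (MCpth x g m) := by
            refine Finset.sum_congr rfl fun x _ => ?_
            rw [Finset.mul_sum]
            exact Finset.sum_congr rfl fun g _ => this x g
        _ = ∑ x : S, P a x * ∑ b, (P ^ m) x b * w b := by
            refine Finset.sum_congr rfl fun x _ => ?_
            rw [ih x w]
        _ = ∑ b, (P ^ (m+1)) a b * w b := by
            simp_rw [Finset.mul_sum]
            rw [Finset.sum_comm]
            refine Finset.sum_congr rfl fun b _ => ?_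
            rw [pow_succ', Matrix.mul_apply, Finset.sum_mul]
            exact Finset.sum_congr rfl fun x _ => by ring

section
variable {S : Type*} [Fintype S] [DecidableEq S]

/-- two-point path-sum identity -/
lemma MC_key2 (P : Matrix S S ℝ) :
    ∀ (j k : ℕ) (a : S) (w v : S → ℝ),
    ∑ g : Fin (j+k) → S, (∏ t ∈ range (j+k), P (MCpth a g t) (MCpth a g (t+1))) *
        (w (MCpth a g j) * v (MCpth a g (j+k)))
      = ∑ b, (P ^ j) a b * (w b * ∑ c, (P ^ k) b c * v c) := by
  intro j
  induction j with
  | zero =>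
      intro k a w v
      have h0 : ∀ g : Fin (0+k) → S, MCpth a g 0 = a := fun g => rfl
      calc ∑ g : Fin (0+k) → S, (∏ t ∈ range (0+k), P (MCpth a g t) (MCpth a g (t+1))) *
            (w (MCpth a g 0) * v (MCpth a g (0+k)))
          = w a * ∑ g : Fin (0+k) → S, (∏ t ∈ range (0+k), P (MCpth a g t) (MCpth a g (t+1))) *
              v (MCpth a g (0+k)) := by
            rw [Finset.mul_sum]
            exact Finset.sum_congr rfl fun g _ => by rw [h0 g]; ring
        _ = w a * ∑ c, (P ^ (0+k)) a c * v c := by rw [MC_key]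
        _ = ∑ b, (P ^ 0) a b * (w b * ∑ c, (P ^ k) b c * v c) := by
            simp [Matrix.one_apply, Nat.zero_add]
  | succ j ih =>
      intro k a w v
      have hjk : j + 1 + k = (j + k) + 1 := by omega
      rw [hjk]
      rw [← Equiv.sum_comp (Fin.consEquiv (fun _ : Fin ((j+k)+1) => S))
        (fun g => (∏ t ∈ range ((j+k)+1), P (MCpth a g t) (MCpth a g (t+1))) *
          (w (MCpth a g (j+1)) * v (MCpth a g ((j+k)+1))))]
      rw [Fintype.sum_prod_type]
      have key : ∀ (x : S) (g : Fin (j+k) → S),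
          (∏ t ∈ range ((j+k)+1), P (MCpth a (Fin.cons x g) t) (MCpth a (Fin.cons x g) (t+1))) *
            (w (MCpth a (Fin.cons x g) (j+1)) * v (MCpth a (Fin.cons x g) ((j+k)+1)))
          = P a x * ((∏ t ∈ range (j+k), P (MCpth x g t) (MCpth x g (t+1))) *
              (w (MCpth x g j) * v (MCpth x g (j+k)))) := by
        intro x g
        rw [MC_step, MCpth_cons a x g (Nat.le_add_right j k), MCpth_cons a x g le_rfl, mul_assoc]
      calc ∑ x : S, ∑ g : Fin (j+k) → S,
            (∏ t ∈ range ((j+k)+1),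
              P (MCpth a ((Fin.consEquiv _) (x, g)) t) (MCpth a ((Fin.consEquiv _) (x, g)) (t+1))) *
              (w (MCpth a ((Fin.consEquiv _) (x, g)) (j+1)) *
                v (MCpth a ((Fin.consEquiv _) (x, g)) ((j+k)+1)))
          = ∑ x : S, P a x * ∑ g : Fin (j+k) → S,
              (∏ t ∈ range (j+k), P (MCpth x g t) (MCpth x g (t+1))) *
                (w (MCpth x g j) * v (MCpth x g (j+k))) := by
            refine Finset.sum_congr rfl fun x _ => ?_
            rw [Finset.mul_sum]
            exact Finset.sum_congr rfl fun g _ => key x g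
        _ = ∑ x : S, P a x * ∑ b, (P ^ j) x b * (w b * ∑ c, (P ^ k) b c * v c) := by
            refine Finset.sum_congr rfl fun x _ => ?_
            rw [ih k x w v]
        _ = ∑ b, (P ^ (j+1)) a b * (w b * ∑ c, (P ^ k) b c * v c) := by
            simp_rw [Finset.mul_sum]
            rw [Finset.sum_comm]
            refine Finset.sum_congr rfl fun b _ => ?_
            rw [pow_succ', Matrix.mul_apply, Finset.sum_comm]
            refine Finset.sum_congr rfl fun c _ => ?_
            rw [Finset.sum_mul]
            exact Finset.sum_congr rfl fun x _ => by ring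
end

lemma MC_joint {S : Type*} [Fintype S] [DecidableEq S] [MeasurableSpace S]
    [MeasurableSingletonClass S]
    (P : Matrix S S ℝ) {Ω : Type*} [MeasurableSpace Ω] (μ : Measure Ω) [IsProbabilityMeasure μ]
    (s : S) (Z : ℕ → Ω → S) (hZmeas : ∀ j, Measurable (Z j))
    (hpath : ∀ (j : ℕ) (path : ℕ → S),
      (μ {ω | ∀ t ≤ j, Z t ω = path t}).toReal
        = (if path 0 = s then 1 else 0) * ∏ t ∈ Finset.range j, P (path t) (path (t + 1)))
    (j k : ℕ) (a b : S) :
    (μ {ω | Z j ω = a ∧ Z (j+k) ω = b}).toReal = (P ^ j) s a * (P ^ k) a b := by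
  classical
  set m := j + k with hm
  set Cyl : S × (Fin m → S) → Set Ω := fun p => {ω | ∀ t ≤ m, Z t ω = MCpth p.1 p.2 t} with hCyl
  have hmeas : ∀ p, MeasurableSet (Cyl p) := by
    intro p
    have : Cyl p = ⋂ (t : ℕ) (_ : t ≤ m), (Z t) ⁻¹' {MCpth p.1 p.2 t} := by
      ext ω; simp [hCyl]
    rw [this]
    exact MeasurableSet.iInter fun t => MeasurableSet.iInter fun _ =>
      (hZmeas t) (measurableSet_singleton _)
  have hdisj : ∀ p q : S × (Fin m → S), p ≠ q → Disjoint (Cyl p) (Cyl q) := by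
    intro p q hpq
    rw [Set.disjoint_left]
    intro ω hp hq
    apply hpq
    have hp' : ∀ t ≤ m, Z t ω = MCpth p.1 p.2 t := hp
    have hq' : ∀ t ≤ m, Z t ω = MCpth q.1 q.2 t := hq
    have h1 : p.1 = q.1 := by
      have e1 := hp' 0 (Nat.zero_le m)
      have e2 := hq' 0 (Nat.zero_le m)
      rw [MCpth_zero] at e1 e2
      rw [← e1, ← e2]
    have h2 : p.2 = q.2 := by
      funext u
      have hu : (u : ℕ) + 1 ≤ m := Nat.succ_le_of_lt u.isLt
      have e1 := hp' ((u : ℕ) + 1) hu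
      have e2 := hq' ((u : ℕ) + 1) hu
      rw [MCpth_succ _ _ u.isLt] at e1 e2
      rw [Fin.eta] at e1 e2
      rw [← e1, ← e2]
    exact Prod.ext h1 h2
  set T : Finset (S × (Fin m → S)) :=
    Finset.univ.filter (fun p => MCpth p.1 p.2 j = a ∧ MCpth p.1 p.2 m = b) with hT
  have hunion : {ω | Z j ω = a ∧ Z (j+k) ω = b} = ⋃ p ∈ T, Cyl p := by
    ext ω
    simp only [Set.mem_setOf_eq, Set.mem_iUnion]
    constructor
    · rintro ⟨hja, hkb⟩
      set p : S × (Fin m → S) := (Z 0 ω, fun u => Z ((u : ℕ) + 1) ω) with hp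
      have claim : ∀ t ≤ m, Z t ω = MCpth p.1 p.2 t := by
        intro t ht
        cases t with
        | zero => rfl
        | succ u =>
            have hu : u < m := ht
            rw [MCpth_succ _ _ hu]
      refine ⟨p, ?_, claim⟩
      rw [hT, Finset.mem_filter]
      refine ⟨Finset.mem_univ _, ?_, ?_⟩
      · rw [← claim j (Nat.le_add_right j k)]; exact hja
      · rw [← claim m le_rfl]; exact hkb
    · rintro ⟨p, hpT, hωp⟩
      rw [hT, Finset.mem_filter] at hpT
      have hωp' : ∀ t ≤ m, Z t ω = MCpth p.1 p.2 t := hωp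
      constructor
      · rw [hωp' j (Nat.le_add_right j k)]; exact hpT.2.1
      · rw [hωp' (j+k) le_rfl]; exact hpT.2.2
  have hdisj' : (T : Set (S × (Fin m → S))).PairwiseDisjoint Cyl :=
    fun p _ q _ hpq => hdisj p q hpq
  rw [hunion, measure_biUnion_finset hdisj' (fun p _ => hmeas p),
    ENNReal.toReal_sum (fun p _ => measure_ne_top μ _)]
  have hterm : ∀ p : S × (Fin m → S), (μ (Cyl p)).toReal
      = (if p.1 = s then (1:ℝ) else 0) *
        ∏ t ∈ Finset.range m, P (MCpth p.1 p.2 t) (MCpth p.1 p.2 (t + 1)) := by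
    intro p
    have := hpath m (MCpth p.1 p.2)
    rw [MCpth_zero] at this
    exact this
  calc ∑ p ∈ T, (μ (Cyl p)).toReal
      = ∑ p : S × (Fin m → S),
          (if MCpth p.1 p.2 j = a ∧ MCpth p.1 p.2 m = b then
            (if p.1 = s then (1:ℝ) else 0) *
              ∏ t ∈ Finset.range m, P (MCpth p.1 p.2 t) (MCpth p.1 p.2 (t + 1)) else 0) := by
        rw [hT, Finset.sum_filter]
        exact Finset.sum_congr rfl fun p _ => by
          by_cases h : MCpth p.1 p.2 j = a ∧ MCpth p.1 p.2 m = b <;> simp [h, hterm p]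
    _ = ∑ p : S × (Fin m → S), (if p.1 = s then (1:ℝ) else 0) *
          ((∏ t ∈ Finset.range m, P (MCpth p.1 p.2 t) (MCpth p.1 p.2 (t + 1))) *
            ((if MCpth p.1 p.2 j = a then (1:ℝ) else 0) *
              (if MCpth p.1 p.2 m = b then (1:ℝ) else 0))) := by
        refine Finset.sum_congr rfl fun p _ => ?_
        by_cases h1 : MCpth p.1 p.2 j = a <;> by_cases h2 : MCpth p.1 p.2 m = b <;>
          simp [h1, h2]
    _ = ∑ g : Fin m → S,
          (∏ t ∈ Finset.range m, P (MCpth s g t) (MCpth s g (t + 1))) *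
            ((if MCpth s g j = a then (1:ℝ) else 0) *
              (if MCpth s g m = b then (1:ℝ) else 0)) := by
        rw [Fintype.sum_prod_type, Finset.sum_comm]
        refine Finset.sum_congr rfl fun g _ => ?_
        simp only [ite_mul, one_mul, zero_mul]
        rw [Finset.sum_ite_eq' Finset.univ s]
        simp
    _ = (P ^ j) s a * (P ^ k) a b := by
        rw [hm, MC_key2 P j k s (fun y => if y = a then (1:ℝ) else 0)
          (fun y => if y = b then (1:ℝ) else 0)]
        simp [mul_ite, ite_mul, Finset.sum_ite_eq']

lemma MC_pow_nonneg {S : Type*} [Fintype S] [DecidableEq S] {P : Matrix S S ℝ} (hP0 : ∀ i r, 0 ≤ P i r) :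
    ∀ (k : ℕ) (x y : S), 0 ≤ (P ^ k) x y := by
  intro k
  induction k with
  | zero => intro x y; rw [pow_zero, Matrix.one_apply]; split <;> norm_num
  | succ k ih =>
      intro x y
      rw [pow_succ, Matrix.mul_apply]
      exact Finset.sum_nonneg fun c _ => mul_nonneg (ih x c) (hP0 c y)

lemma MC_pow_row {S : Type*} [Fintype S] [DecidableEq S] {P : Matrix S S ℝ} (hProw : ∀ i, ∑ r, P i r = 1) :
    ∀ (k : ℕ) (x : S), ∑ y, (P ^ k) x y = 1 := by
  intro k
  induction k with
  | zero => intro x; simp [Matrix.one_apply]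
  | succ k ih =>
      intro x
      simp_rw [pow_succ, Matrix.mul_apply]
      rw [Finset.sum_comm]
      calc ∑ c, ∑ y, (P ^ k) x c * P c y = ∑ c, (P ^ k) x c * ∑ y, P c y := by
            exact Finset.sum_congr rfl fun c _ => (Finset.mul_sum _ _ _).symm
        _ = 1 := by simp_rw [hProw]; simpa using ih x

lemma MC_pow_le_one {S : Type*} [Fintype S] [DecidableEq S] {P : Matrix S S ℝ} (hP0 : ∀ i r, 0 ≤ P i r)
    (hProw : ∀ i, ∑ r, P i r = 1) (k : ℕ) (x y : S) : (P ^ k) x y ≤ 1 := by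
  have h := MC_pow_row hProw k x
  have : (P ^ k) x y ≤ ∑ z, (P ^ k) x z :=
    Finset.single_le_sum (fun z _ => MC_pow_nonneg hP0 k x z) (Finset.mem_univ y)
  linarith

/-- for a geometrically ergodic finite Markov chain started at `s`, the occupation
times `W_{in} = ∑_{j=1}^n 1[Z_j = i]` satisfy `n⁻¹ E[W_{in}] → π_i` and
`n⁻¹ Cov(W_{in}, W_{rn}) → V_{ir}`. -/
theorem occupation_time_moment_asymptotics
    {S : Type*} [Fintype S] [DecidableEq S] [Nonempty S]
    [MeasurableSpace S] [MeasurableSingletonClass S]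
    (P : Matrix S S ℝ) (hP0 : ∀ i r, 0 ≤ P i r) (hProw : ∀ i, ∑ r, P i r = 1)
    (π : S → ℝ) (hπpos : ∀ r, 0 < π r) (hπ1 : ∑ r, π r = 1)
    (C ρ : ℝ) (hρ : ρ ∈ Set.Ioo (0 : ℝ) 1)
    (hgeo : ∀ k : ℕ, 1 ≤ k → ∀ i r, |(P ^ k) i r - π r| ≤ C * ρ ^ k)
    {Ω : Type*} [MeasurableSpace Ω] (μ : Measure Ω) [IsProbabilityMeasure μ]
    (s : S) (Z : ℕ → Ω → S) (hZmeas : ∀ j, Measurable (Z j))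
    -- the law of `Z` is the canonical path measure of the chain with transition matrix `P`
    -- started at `s`
    (hpath : ∀ (j : ℕ) (path : ℕ → S),
      (μ {ω | ∀ t ≤ j, Z t ω = path t}).toReal
        = (if path 0 = s then 1 else 0) * ∏ t ∈ Finset.range j, P (path t) (path (t + 1)))
    (W : S → ℕ → Ω → ℝ)
    (hW : ∀ i nn ω, W i nn ω = ∑ j ∈ Finset.Icc 1 nn, (if Z j ω = i then (1:ℝ) else 0))
    (Vlim : S → S → ℝ)
    (hV : ∀ i r, Vlim i r
      = π i * (∑' k : ℕ, ((P ^ (k + 1)) i r - π r))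
        + π r * (∑' k : ℕ, ((P ^ (k + 1)) r i - π i))
        + (if i = r then π i else 0) - π i * π r)
    (i r : S) :
    Tendsto (fun nn : ℕ => (nn : ℝ)⁻¹ * ∫ ω, W i nn ω ∂μ) atTop (nhds (π i)) ∧
    Tendsto (fun nn : ℕ => (nn : ℝ)⁻¹ *
        ∫ ω, (W i nn ω - ∫ ω', W i nn ω' ∂μ) * (W r nn ω - ∫ ω', W r nn ω' ∂μ) ∂μ)
      atTop (nhds (Vlim i r)) := by
  classical
  obtain ⟨hρ0, hρ1⟩ := hρ
  have hC0 : 0 ≤ C := by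
    have h1 := hgeo 1 le_rfl i r
    have h2 : 0 ≤ |(P ^ 1) i r - π r| := abs_nonneg _
    nlinarith
  -- joint probabilities
  have hJ : ∀ (j k : ℕ) (a b : S),
      (μ {ω | Z j ω = a ∧ Z (j+k) ω = b}).toReal = (P ^ j) s a * (P ^ k) a b :=
    MC_joint P μ s Z hZmeas hpath
  -- marginals
  have hmarg : ∀ (j : ℕ) (a : S), (μ {ω | Z j ω = a}).toReal = (P ^ j) s a := by
    intro j a
    have h := hJ j 0 a a
    rw [pow_zero, Matrix.one_apply_eq, mul_one] at h
    have hset : {ω : Ω | Z j ω = a ∧ Z (j+0) ω = a} = {ω | Z j ω = a} := by ext ω; simp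
    rw [hset] at h
    exact h
  -- indicator functions
  have hsetMeas : ∀ (j l : ℕ) (a b : S), MeasurableSet {ω | Z j ω = a ∧ Z l ω = b} := by
    intro j l a b
    have : {ω | Z j ω = a ∧ Z l ω = b} = (Z j) ⁻¹' {a} ∩ (Z l) ⁻¹' {b} := by
      ext ω; simp [Set.mem_preimage]
    rw [this]
    exact ((hZmeas j) (measurableSet_singleton a)).inter ((hZmeas l) (measurableSet_singleton b))
  have hind : ∀ (j : ℕ) (a : S), (fun ω => if Z j ω = a then (1:ℝ) else 0)
      = Set.indicator ((Z j) ⁻¹' {a}) (fun _ => (1:ℝ)) := by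
    intro j a; funext ω; simp [Set.indicator_apply, Set.mem_preimage]
  have hindInt : ∀ (j : ℕ) (a : S), Integrable (fun ω => if Z j ω = a then (1:ℝ) else 0) μ := by
    intro j a
    rw [hind]
    exact (integrable_const (1:ℝ)).indicator ((hZmeas j) (measurableSet_singleton a))
  have hindEq : ∀ (j : ℕ) (a : S),
      ∫ ω, (if Z j ω = a then (1:ℝ) else 0) ∂μ = (μ {ω | Z j ω = a}).toReal := by
    intro j a
    rw [hind, integral_indicator_const (1:ℝ) ((hZmeas j) (measurableSet_singleton a))]
    rw [smul_eq_mul, mul_one]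
    have : Z j ⁻¹' {a} = {ω | Z j ω = a} := by ext ω; simp [Set.mem_preimage]
    rw [this]
    rfl
  have hind2 : ∀ (j l : ℕ) (a b : S), (fun ω => if Z j ω = a ∧ Z l ω = b then (1:ℝ) else 0)
      = Set.indicator {ω | Z j ω = a ∧ Z l ω = b} (fun _ => (1:ℝ)) := by
    intro j l a b; funext ω; simp [Set.indicator_apply]
  have hindInt2 : ∀ (j l : ℕ) (a b : S),
      Integrable (fun ω => if Z j ω = a ∧ Z l ω = b then (1:ℝ) else 0) μ := by
    intro j l a b
    rw [hind2]
    exact (integrable_const (1:ℝ)).indicator (hsetMeas j l a b)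
  have hindEq2 : ∀ (j l : ℕ) (a b : S),
      ∫ ω, (if Z j ω = a ∧ Z l ω = b then (1:ℝ) else 0) ∂μ
        = (μ {ω | Z j ω = a ∧ Z l ω = b}).toReal := by
    intro j l a b
    rw [hind2, integral_indicator_const (1:ℝ) (hsetMeas j l a b), smul_eq_mul, mul_one]
    rfl
  have hindProd : ∀ (j l : ℕ) (a b : S) (ω : Ω),
      (if Z j ω = a then (1:ℝ) else 0) * (if Z l ω = b then (1:ℝ) else 0)
        = if Z j ω = a ∧ Z l ω = b then (1:ℝ) else 0 := by
    intro j l a b ω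
    by_cases h1 : Z j ω = a <;> by_cases h2 : Z l ω = b <;> simp [h1, h2]
  -- W as a sum of indicators
  have hWfun : ∀ (a : S) (n : ℕ),
      W a n = fun ω => ∑ j ∈ Finset.Icc 1 n, (if Z j ω = a then (1:ℝ) else 0) :=
    fun a n => funext fun ω => hW a n ω
  have hWint : ∀ (a : S) (n : ℕ), Integrable (W a n) μ := by
    intro a n
    rw [hWfun]
    exact integrable_finset_sum _ fun j _ => hindInt j a
  have hEW : ∀ (a : S) (n : ℕ), ∫ ω, W a n ω ∂μ = ∑ j ∈ Finset.Icc 1 n, (P ^ j) s a := by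
    intro a n
    rw [hWfun]
    rw [integral_finset_sum _ fun j _ => hindInt j a]
    exact Finset.sum_congr rfl fun j _ => by rw [hindEq j a, hmarg j a]
  -- second moments
  have hWWfun : ∀ n, (fun ω => W i n ω * W r n ω)
      = fun ω => ∑ j ∈ Finset.Icc 1 n, ∑ l ∈ Finset.Icc 1 n,
          (if Z j ω = i ∧ Z l ω = r then (1:ℝ) else 0) := by
    intro n
    funext ω
    rw [hW, hW, Finset.sum_mul_sum]
    exact Finset.sum_congr rfl fun j _ => Finset.sum_congr rfl fun l _ => hindProd j l i r ω
  have hWWint : ∀ n, Integrable (fun ω => W i n ω * W r n ω) μ := by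
    intro n
    rw [hWWfun]
    exact integrable_finset_sum _ fun j _ => integrable_finset_sum _ fun l _ => hindInt2 j l i r
  have hEWW : ∀ n, ∫ ω, W i n ω * W r n ω ∂μ
      = ∑ j ∈ Finset.Icc 1 n, ∑ l ∈ Finset.Icc 1 n,
          (μ {ω | Z j ω = i ∧ Z l ω = r}).toReal := by
    intro n
    rw [hWWfun]
    rw [integral_finset_sum _ fun j _ => integrable_finset_sum _ fun l _ => hindInt2 j l i r]
    refine Finset.sum_congr rfl fun j _ => ?_
    rw [integral_finset_sum _ fun l _ => hindInt2 j l i r]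
    exact Finset.sum_congr rfl fun l _ => hindEq2 j l i r
  -- the covariance as a double sum
  set e : ℕ → ℕ → ℝ :=
    fun j l => (μ {ω | Z j ω = i ∧ Z l ω = r}).toReal - (P ^ j) s i * (P ^ l) s r with he
  set Cov : ℕ → ℝ := fun n => ∑ j ∈ Finset.Icc 1 n, ∑ l ∈ Finset.Icc 1 n, e j l with hCovdef
  have hCovInt : ∀ n, ∫ ω, (W i n ω - ∫ ω', W i n ω' ∂μ) * (W r n ω - ∫ ω', W r n ω' ∂μ) ∂μ
      = Cov n := by
    intro n
    have I1 := hWWint n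
    have I2 : Integrable (fun ω => (∫ ω', W i n ω' ∂μ) * W r n ω) μ :=
      (hWint r n).const_mul (∫ ω', W i n ω' ∂μ)
    have I3 : Integrable (fun ω => (∫ ω', W r n ω' ∂μ) * W i n ω) μ :=
      (hWint i n).const_mul (∫ ω', W r n ω' ∂μ)
    have I12 : Integrable (fun ω => W i n ω * W r n ω - (∫ ω', W i n ω' ∂μ) * W r n ω) μ :=
      I1.sub I2
    have I123 : Integrable (fun ω => W i n ω * W r n ω - (∫ ω', W i n ω' ∂μ) * W r n ω
        - (∫ ω', W r n ω' ∂μ) * W i n ω) μ := I12.sub I3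
    have hexp : (fun ω => (W i n ω - ∫ ω', W i n ω' ∂μ) * (W r n ω - ∫ ω', W r n ω' ∂μ))
        = fun ω => (W i n ω * W r n ω - (∫ ω', W i n ω' ∂μ) * W r n ω
            - (∫ ω', W r n ω' ∂μ) * W i n ω) + (∫ ω', W i n ω' ∂μ) * (∫ ω', W r n ω' ∂μ) :=
      funext fun ω => by ring
    rw [hexp, integral_add I123 (integrable_const _),
      integral_sub I12 I3, integral_sub I1 I2, integral_const_mul, integral_const_mul,
      integral_const]
    have hh : Cov n
        = (∑ j ∈ Finset.Icc 1 n, ∑ l ∈ Finset.Icc 1 n,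
            (μ {ω | Z j ω = i ∧ Z l ω = r}).toReal)
          - (∑ j ∈ Finset.Icc 1 n, (P ^ j) s i) * (∑ l ∈ Finset.Icc 1 n, (P ^ l) s r) := by
      simp only [hCovdef, he]
      rw [Finset.sum_mul_sum, ← Finset.sum_sub_distrib]
      exact Finset.sum_congr rfl fun j _ => Finset.sum_sub_distrib _ _
    rw [hh, hEWW n, hEW i n, hEW r n]
    simp only [measure_univ, ENNReal.toReal_one, smul_eq_mul, one_mul, probReal_univ, mul_one]
    ring
  -- limits of marginals
  have hMlim : ∀ c : S, Tendsto (fun m : ℕ => (P ^ m) s c) atTop (nhds (π c)) := by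
    intro c
    have hb : ∀ᶠ m in atTop, ‖(P ^ m) s c - π c‖ ≤ C * ρ ^ m := by
      filter_upwards [eventually_ge_atTop 1] with m hm
      rw [Real.norm_eq_abs]
      exact hgeo m hm s c
    have h0 : Tendsto (fun m : ℕ => C * ρ ^ m) atTop (nhds 0) := by
      simpa using (tendsto_pow_atTop_nhds_zero_of_lt_one hρ0.le hρ1).const_mul C
    have h1 := (squeeze_zero_norm' hb h0).add_const (π c)
    simpa using h1
  -- shifting sums over `Icc 1 n` to sums over `range n`
  have hshift : ∀ (f : ℕ → ℝ) (n : ℕ),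
      ∑ j ∈ Finset.Icc 1 n, f j = ∑ m ∈ Finset.range n, f (m+1) := by
    intro f n
    rw [← Finset.Ico_add_one_right_eq_Icc, Finset.sum_Ico_eq_sum_range]
    exact Finset.sum_congr rfl fun m _ => by rw [Nat.add_comm]
  -- part (a)
  have parta : Tendsto (fun nn : ℕ => (nn : ℝ)⁻¹ * ∫ ω, W i nn ω ∂μ) atTop (nhds (π i)) := by
    have h1 : Tendsto (fun m : ℕ => (P ^ (m+1)) s i) atTop (nhds (π i)) :=
      (hMlim i).comp (tendsto_add_atTop_nat 1)
    refine h1.cesaro.congr fun n => ?_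
    congr 1
    rw [hEW i n, hshift (fun j => (P ^ j) s i) n]
  refine ⟨parta, ?_⟩
  -- part (b): telescoping
  have hCov0 : Cov 0 = 0 := by simp [hCovdef]
  have htel : ∀ n, Cov n = ∑ m ∈ Finset.range n, (Cov (m+1) - Cov m) := by
    intro n
    rw [Finset.sum_range_sub Cov, hCov0, sub_zero]
  have hIccTop : ∀ (m : ℕ) (f : ℕ → ℝ),
      ∑ l ∈ Finset.Icc 1 (m+1), f l = ∑ l ∈ Finset.Icc 1 m, f l + f (m+1) :=
    fun m f => Finset.sum_Icc_succ_top (Nat.succ_le_succ (Nat.zero_le m)) f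
  have hD : ∀ m, Cov (m+1) - Cov m
      = (∑ j ∈ Finset.Icc 1 m, e j (m+1))
        + ((∑ l ∈ Finset.Icc 1 m, e (m+1) l) + e (m+1) (m+1)) := by
    intro m
    have h1 : Cov (m+1) = ∑ j ∈ Finset.Icc 1 m, (∑ l ∈ Finset.Icc 1 m, e j l + e j (m+1))
        + (∑ l ∈ Finset.Icc 1 m, e (m+1) l + e (m+1) (m+1)) := by
      simp only [hCovdef]
      rw [hIccTop m (fun j => ∑ l ∈ Finset.Icc 1 (m+1), e j l)]
      congr 1
      · exact Finset.sum_congr rfl fun j _ => hIccTop m (e j)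
      · exact hIccTop m (e (m+1))
    rw [h1]
    simp only [hCovdef]
    rw [Finset.sum_add_distrib]
    ring
  -- explicit formulas for boundary terms
  have hediag : ∀ m : ℕ, e (m+1) (m+1)
      = (P ^ (m+1)) s i * ((if i = r then (1:ℝ) else 0) - (P ^ (m+1)) s r) := by
    intro m
    have h := hJ (m+1) 0 i r
    rw [pow_zero, Matrix.one_apply] at h
    have hset : {ω : Ω | Z (m+1) ω = i ∧ Z ((m+1)+0) ω = r}
        = {ω | Z (m+1) ω = i ∧ Z (m+1) ω = r} := rfl
    rw [hset] at h
    simp only [he]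
    rw [h]
    ring
  have hoff1 : ∀ (m j : ℕ), 1 ≤ j → j ≤ m →
      e j (m+1) = (P ^ j) s i * ((P ^ (m+1-j)) i r - (P ^ (m+1)) s r) := by
    intro m j h1 h2
    have hj : j + (m+1-j) = m+1 := by omega
    have h := hJ j (m+1-j) i r
    rw [hj] at h
    simp only [he]
    rw [h]
    ring
  have hoff2 : ∀ (m l : ℕ), 1 ≤ l → l ≤ m →
      e (m+1) l = (P ^ l) s r * ((P ^ (m+1-l)) r i - (P ^ (m+1)) s i) := by
    intro m l h1 h2
    have hl : l + (m+1-l) = m+1 := by omega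
    have h := hJ l (m+1-l) r i
    rw [hl] at h
    have hswap : {ω : Ω | Z (m+1) ω = i ∧ Z l ω = r} = {ω | Z l ω = r ∧ Z (m+1) ω = i} := by
      ext ω
      exact ⟨fun hh => ⟨hh.2, hh.1⟩, fun hh => ⟨hh.2, hh.1⟩⟩
    simp only [he]
    rw [hswap, h]
    ring
  -- the dominating geometric bound
  have hsummable : Summable (fun k : ℕ => 2 * C * ρ ^ (k+1)) := by
    have h := (summable_geometric_of_lt_one hρ0.le hρ1).mul_left (2 * C * ρ)
    refine h.congr fun k => ?_
    rw [pow_succ]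
    ring
  -- the convolution limit, via dominated convergence for series
  have key : ∀ a b : S, Tendsto
      (fun m => ∑ j ∈ Finset.Icc 1 m, (P ^ j) s a * ((P ^ (m+1-j)) a b - (P ^ (m+1)) s b))
      atTop (nhds (π a * ∑' k : ℕ, ((P ^ (k+1)) a b - π b))) := by
    intro a b
    set F : ℕ → ℕ → ℝ := fun m k =>
      if k + 1 ≤ m then (P ^ (m-k)) s a * ((P ^ (k+1)) a b - (P ^ (m+1)) s b) else 0 with hF
    have hstep1 : ∀ m, ∑ j ∈ Finset.Icc 1 m, (P ^ j) s a * ((P ^ (m+1-j)) a b - (P ^ (m+1)) s b)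
        = ∑' k, F m k := by
      intro m
      have hzero : ∀ k ∉ Finset.range m, F m k = 0 := by
        intro k hk
        have hm : ¬ (k + 1 ≤ m) := fun h => hk (Finset.mem_range.mpr (by omega))
        simp [hF, hm, show ¬ k < m by omega]
      rw [tsum_eq_sum hzero,
        hshift (fun j => (P ^ j) s a * ((P ^ (m+1-j)) a b - (P ^ (m+1)) s b)) m,
        ← Finset.sum_range_reflect]
      refine Finset.sum_congr rfl fun u hu => ?_
      have hu' : u < m := Finset.mem_range.mp hu
      have e1 : m - 1 - u + 1 = m - u := by omega
      have e2 : m + 1 - (m - u) = u + 1 := by omega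
      have e3 : u + 1 ≤ m := hu'
      rw [e1, e2]
      simp [hF, e3, show ¬ m ≤ u by omega]
    have hstep2 : Tendsto (fun m => ∑' k, F m k) atTop
        (nhds (∑' k : ℕ, π a * ((P ^ (k+1)) a b - π b))) := by
      apply tendsto_tsum_of_dominated_convergence hsummable
      · intro k
        have h1 : Tendsto (fun m : ℕ => (P ^ (m-k)) s a) atTop (nhds (π a)) :=
          (hMlim a).comp (tendsto_sub_atTop_nat k)
        have h2 : Tendsto (fun m : ℕ => (P ^ (m+1)) s b) atTop (nhds (π b)) :=
          (hMlim b).comp (tendsto_add_atTop_nat 1)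
        have h3 := h1.mul
          ((tendsto_const_nhds (x := (P ^ (k+1)) a b) (f := atTop)).sub h2)
        refine h3.congr' ?_
        filter_upwards [eventually_ge_atTop (k+1)] with m hm
        simp [hF, hm, show ¬ m ≤ k by omega]
      · refine Filter.Eventually.of_forall fun m k => ?_
        by_cases hk : k + 1 ≤ m
        · have hb1 : |(P ^ (k+1)) a b - π b| ≤ C * ρ ^ (k+1) :=
            hgeo (k+1) (Nat.succ_le_succ (Nat.zero_le k)) a b
          have hb2 : |(P ^ (m+1)) s b - π b| ≤ C * ρ ^ (m+1) :=
            hgeo (m+1) (Nat.succ_le_succ (Nat.zero_le m)) s b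
          have hρm : ρ ^ (m+1) ≤ ρ ^ (k+1) :=
            pow_le_pow_of_le_one hρ0.le hρ1.le (by omega)
          have hA1 : |(P ^ (m-k)) s a| ≤ 1 := abs_le.mpr
            ⟨by linarith [MC_pow_nonneg hP0 (m-k) s a], MC_pow_le_one hP0 hProw (m-k) s a⟩
          have htri : |(P ^ (k+1)) a b - (P ^ (m+1)) s b|
              ≤ |(P ^ (k+1)) a b - π b| + |π b - (P ^ (m+1)) s b| := abs_sub_le _ _ _
          have hb2' : |π b - (P ^ (m+1)) s b| ≤ C * ρ ^ (m+1) := by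
            rw [abs_sub_comm]; exact hb2
          have hCm : C * ρ ^ (m+1) ≤ C * ρ ^ (k+1) := mul_le_mul_of_nonneg_left hρm hC0
          calc ‖F m k‖ = |(P ^ (m-k)) s a| * |(P ^ (k+1)) a b - (P ^ (m+1)) s b| := by
                rw [hF]
                simp [hk, abs_mul, Real.norm_eq_abs]
            _ ≤ 1 * (|(P ^ (k+1)) a b - π b| + |π b - (P ^ (m+1)) s b|) :=
                mul_le_mul hA1 htri (abs_nonneg _) zero_le_one
            _ ≤ 2 * C * ρ ^ (k+1) := by
                rw [one_mul]
                linarith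
        · rw [hF]
          simp only [hk, if_false]
          rw [norm_zero]
          positivity
    rw [tsum_mul_left] at hstep2
    exact hstep2.congr fun m => (hstep1 m).symm
  -- the three limits
  have hT1 : Tendsto (fun m => ∑ j ∈ Finset.Icc 1 m, e j (m+1)) atTop
      (nhds (π i * ∑' k : ℕ, ((P ^ (k+1)) i r - π r))) := by
    refine (key i r).congr fun m => ?_
    refine Finset.sum_congr rfl fun j hj => ?_
    obtain ⟨h1, h2⟩ := Finset.mem_Icc.mp hj
    exact (hoff1 m j h1 h2).symm
  have hT2 : Tendsto (fun m => ∑ l ∈ Finset.Icc 1 m, e (m+1) l) atTop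
      (nhds (π r * ∑' k : ℕ, ((P ^ (k+1)) r i - π i))) := by
    refine (key r i).congr fun m => ?_
    refine Finset.sum_congr rfl fun l hl => ?_
    obtain ⟨h1, h2⟩ := Finset.mem_Icc.mp hl
    exact (hoff2 m l h1 h2).symm
  have hT0 : Tendsto (fun m => e (m+1) (m+1)) atTop
      (nhds ((if i = r then π i else 0) - π i * π r)) := by
    have h1 : Tendsto (fun m : ℕ => (P ^ (m+1)) s i) atTop (nhds (π i)) :=
      (hMlim i).comp (tendsto_add_atTop_nat 1)
    have h2 : Tendsto (fun m : ℕ => (P ^ (m+1)) s r) atTop (nhds (π r)) :=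
      (hMlim r).comp (tendsto_add_atTop_nat 1)
    have h3 := h1.mul
      ((tendsto_const_nhds (x := (if i = r then (1:ℝ) else 0)) (f := atTop)).sub h2)
    have h4 := h3.congr fun m => (hediag m).symm
    have hval : π i * ((if i = r then (1:ℝ) else 0) - π r)
        = (if i = r then π i else 0) - π i * π r := by
      by_cases h : i = r <;> simp [h] <;> ring
    rw [← hval]
    exact h4
  have hDlim : Tendsto (fun m => Cov (m+1) - Cov m) atTop (nhds (Vlim i r)) := by
    have h := hT1.add (hT2.add hT0)
    have hval : π i * (∑' k : ℕ, ((P ^ (k+1)) i r - π r))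
        + (π r * (∑' k : ℕ, ((P ^ (k+1)) r i - π i))
          + ((if i = r then π i else 0) - π i * π r)) = Vlim i r := by
      rw [hV i r]
      ring
    rw [hval] at h
    exact h.congr fun m => (hD m).symm
  refine hDlim.cesaro.congr fun n => ?_
  congr 1
  rw [← htel n, ← hCovInt n]
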